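/- Let λ, μ ∈ ℝ satisfy the strong convexity condition μ > 0 and 3λ + 2μ > 0. Let P : ℝ³ → ℝ be a harmonic homogeneous polynomial of degree n ≥ 0, set a = (2nλ + 2(3n+1)μ) / ((n+3)λ + (n+5)μ), and define the vector field 𝒩(x) = a P(x) x + (1 − a/(2n+1) − |x|²) ∇P(x). Then 𝒩 satisfies the Lamé (elastostatic) equation μ Δ𝒩 + (λ+μ) ∇(∇·𝒩) = 0 on ℝ³. -/

import Mathlib

open MeasureTheory Real
open scoped RealInnerProductSpace

noncomputable section

/-- Three-dimensional Euclidean space. -/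
abbrev E3 : Type := EuclideanSpace ℝ (Fin 3)

/-- Build an element of `E3` from coordinates. -/
def toE3 (v : Fin 3 → ℝ) : E3 := (WithLp.equiv 2 (Fin 3 → ℝ)).symm v

/-- Partial derivative in the `i`-th coordinate direction. -/
def pd (f : E3 → ℝ) (i : Fin 3) (x : E3) : ℝ :=
  fderiv ℝ f x (EuclideanSpace.single i 1)

/-- The gradient, as the vector of partial derivatives. -/
def grad3 (f : E3 → ℝ) (x : E3) : E3 := toE3 fun i => pd f i x

/-- The Laplacian: the sum of the second partial derivatives. -/
def lap3 (f : E3 → ℝ) (x : E3) : ℝ := ∑ i, pd (pd f i) i x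

/-- Divergence of a vector field. -/
def div3 (u : E3 → E3) (x : E3) : ℝ := ∑ i, pd (fun y => u y i) i x

/-- Componentwise Laplacian of a vector field. -/
def vlap3 (u : E3 → E3) (x : E3) : E3 := toE3 fun i => lap3 (fun y => u y i) x

/-- Cross product in `ℝ³`. -/
def cross3 (u v : E3) : E3 :=
  toE3 ![u 1 * v 2 - u 2 * v 1, u 2 * v 0 - u 0 * v 2, u 0 * v 1 - u 1 * v 0]

/-- The function `ℝ³ → ℝ` determined by a polynomial in three variables. -/
def polyFun (P : MvPolynomial (Fin 3) ℝ) : E3 → ℝ :=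
  fun x => MvPolynomial.eval (fun i => x i) P

open MvPolynomial in
private lemma pcomm (i j : Fin 3) (p : MvPolynomial (Fin 3) ℝ) :
    pderiv i (pderiv j p) = pderiv j (pderiv i p) := by
  induction p using MvPolynomial.induction_on' with
  | add p q hp hq => simp [hp, hq]
  | monomial s a =>
    rcases eq_or_ne i j with rfl | h
    · rfl
    · simp only [pderiv_monomial]
      have h1 : (s - Finsupp.single j 1 : Fin 3 →₀ ℕ) i = s i := by
        simp [Finsupp.tsub_apply, Finsupp.single_eq_of_ne' h.symm]
      have h2 : (s - Finsupp.single i 1 : Fin 3 →₀ ℕ) j = s j := by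
        simp [Finsupp.tsub_apply, Finsupp.single_eq_of_ne' h]
      have h3 : s - Finsupp.single j 1 - Finsupp.single i 1
          = s - Finsupp.single i 1 - Finsupp.single j 1 := by
        ext k; simp [Finsupp.tsub_apply]; omega
      rw [h1, h2, h3]; congr 1; ring

open MvPolynomial in
private lemma pcomm3 (j i : Fin 3) (P : MvPolynomial (Fin 3) ℝ) :
    pderiv j (pderiv j (pderiv i P)) = pderiv i (pderiv j (pderiv j P)) := by
  rw [pcomm j i P, pcomm j i (pderiv j P)]

open MvPolynomial in
private lemma X_mul_pderiv_monomial {i : Fin 3} {s : Fin 3 →₀ ℕ} {c : ℝ} :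
    X i * pderiv i (monomial s c) = monomial s (c * s i) := by
  rw [pderiv_monomial]
  rcases Nat.eq_zero_or_pos (s i) with h | h
  · simp [h]
  · rw [X, monomial_mul]
    have harg : Finsupp.single i 1 + (s - Finsupp.single i 1) = s := by
      ext k
      rcases eq_or_ne k i with rfl | hk
      · simp [Finsupp.tsub_apply]; omega
      · simp [Finsupp.tsub_apply, Finsupp.single_eq_of_ne' (Ne.symm hk)]
    rw [harg, one_mul]

open MvPolynomial in
private lemma euler3 {n : ℕ} {P : MvPolynomial (Fin 3) ℝ} (hhom : P.IsHomogeneous n) :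
    ∑ i : Fin 3, X i * pderiv i P = C (n : ℝ) * P := by
  conv_lhs => rw [← support_sum_monomial_coeff P]
  conv_rhs => rw [← support_sum_monomial_coeff P]
  simp only [map_sum, Finset.mul_sum]
  rw [Finset.sum_comm]
  refine Finset.sum_congr rfl fun s hs => ?_
  have hdeg : ∑ i : Fin 3, (s i : ℝ) = (n : ℝ) := by
    have := hhom (mem_support_iff.mp hs)
    have h2 : (Finsupp.weight 1) s = ∑ i : Fin 3, s i := by
      rw [Finsupp.weight_apply, Finsupp.sum_fintype]
      · simp
      · simp
    rw [h2] at this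
    rw [← this]; push_cast; ring
  calc ∑ i : Fin 3, X i * pderiv i (monomial s (coeff s P))
      = ∑ i : Fin 3, monomial s (coeff s P * s i) := by
        refine Finset.sum_congr rfl fun i _ => X_mul_pderiv_monomial
    _ = monomial s (∑ i : Fin 3, coeff s P * s i) := by rw [← map_sum]
    _ = C (n:ℝ) * monomial s (coeff s P) := by
        rw [C_mul_monomial]
        congr 1
        rw [← Finset.mul_sum, hdeg]; ring

open MvPolynomial in
private lemma polyFun_hasFDerivAt (P : MvPolynomial (Fin 3) ℝ) (x : E3) :
    HasFDerivAt (polyFun P)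
      (∑ i, polyFun (pderiv i P) x • (EuclideanSpace.proj i : E3 →L[ℝ] ℝ)) x := by
  induction P using MvPolynomial.induction_on with
  | C a =>
      have : polyFun (C a) = fun _ : E3 => a := by funext y; simp [polyFun]
      rw [this]
      have h0 : ∀ j : Fin 3, polyFun (pderiv j (C a)) x = 0 := by
        intro j; rw [pderiv_C]; simp [polyFun]
      simp only [h0, zero_smul, Finset.sum_const_zero]
      exact hasFDerivAt_const a x
  | add p q hp hq =>
      have hfun : polyFun (p + q) = fun y => polyFun p y + polyFun q y := by
        funext y; simp [polyFun]
      have hD : (∑ i, polyFun (pderiv i (p + q)) x • (EuclideanSpace.proj i : E3 →L[ℝ] ℝ))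
          = (∑ i, polyFun (pderiv i p) x • (EuclideanSpace.proj i : E3 →L[ℝ] ℝ))
            + (∑ i, polyFun (pderiv i q) x • (EuclideanSpace.proj i : E3 →L[ℝ] ℝ)) := by
        rw [← Finset.sum_add_distrib]
        refine Finset.sum_congr rfl fun j _ => ?_
        have : polyFun (pderiv j (p + q)) x = polyFun (pderiv j p) x + polyFun (pderiv j q) x := by
          simp [polyFun]
        rw [this, add_smul]
      rw [hfun, hD]
      exact hp.add hq
  | mul_X p i hp =>
      have hX : HasFDerivAt (fun y : E3 => y i) (EuclideanSpace.proj i : E3 →L[ℝ] ℝ) x :=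
        (EuclideanSpace.proj i : E3 →L[ℝ] ℝ).hasFDerivAt
      have hmul := hp.mul hX
      have hfun : polyFun (p * X i) = fun y : E3 => polyFun p y * y i := by
        funext y; simp [polyFun]
      rw [show (polyFun p * fun y : E3 => y i) = polyFun (p * X i) by rw [hfun]; rfl] at hmul
      have hD : (∑ j, polyFun (pderiv j (p * X i)) x • (EuclideanSpace.proj j : E3 →L[ℝ] ℝ))
          = polyFun p x • (EuclideanSpace.proj i : E3 →L[ℝ] ℝ)
            + x i • ∑ j, polyFun (pderiv j p) x • (EuclideanSpace.proj j : E3 →L[ℝ] ℝ) := by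
        have hterm : ∀ j : Fin 3,
            polyFun (pderiv j (p * X i)) x • (EuclideanSpace.proj j : E3 →L[ℝ] ℝ)
            = (if i = j then polyFun p x • (EuclideanSpace.proj j : E3 →L[ℝ] ℝ) else 0)
              + x i • (polyFun (pderiv j p) x • (EuclideanSpace.proj j : E3 →L[ℝ] ℝ)) := by
          intro j
          have : polyFun (pderiv j (p * X i)) x
              = (if i = j then polyFun p x else 0) + x i * polyFun (pderiv j p) x := by
            rw [pderiv_mul, pderiv_X]
            simp [polyFun, Pi.single_apply, apply_ite (MvPolynomial.eval (fun k : Fin 3 => x k))]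
            ring
          rw [this, add_smul, ite_smul, zero_smul, smul_smul]
        rw [Finset.sum_congr rfl fun j _ => hterm j, Finset.sum_add_distrib, Finset.sum_ite_eq,
          Finset.smul_sum]
        simp
      rw [hD]
      exact hmul

private lemma pd_polyFun (P : MvPolynomial (Fin 3) ℝ) (i : Fin 3) (x : E3) :
    pd (polyFun P) i x = polyFun (MvPolynomial.pderiv i P) x := by
  rw [pd, (polyFun_hasFDerivAt P x).fderiv]
  rw [ContinuousLinearMap.sum_apply]
  have key : ∀ j : Fin 3,
      (polyFun (MvPolynomial.pderiv j P) x • (EuclideanSpace.proj j : E3 →L[ℝ] ℝ))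
      (EuclideanSpace.single i 1)
      = if i = j then polyFun (MvPolynomial.pderiv j P) x else 0 := by
    intro j
    rw [ContinuousLinearMap.smul_apply]
    have h1 : (EuclideanSpace.proj j : E3 →L[ℝ] ℝ) (EuclideanSpace.single i 1)
        = EuclideanSpace.single i 1 j := rfl
    have h2 : (EuclideanSpace.single i (1:ℝ)) j = if i = j then 1 else 0 := by
      rw [EuclideanSpace.single_apply]; simp [eq_comm]
    rw [h1, h2]
    split <;> simp
  rw [Finset.sum_congr rfl fun j _ => key j, Finset.sum_ite_eq]
  simp

private lemma pd_polyFun' (P : MvPolynomial (Fin 3) ℝ) (i : Fin 3) :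
    pd (polyFun P) i = polyFun (MvPolynomial.pderiv i P) := funext fun x => pd_polyFun P i x

private lemma lap3_polyFun (P : MvPolynomial (Fin 3) ℝ) (x : E3) :
    lap3 (polyFun P) x
      = polyFun (∑ j, MvPolynomial.pderiv j (MvPolynomial.pderiv j P)) x := by
  rw [lap3]
  have : ∀ j : Fin 3, pd (pd (polyFun P) j) j x
      = polyFun (MvPolynomial.pderiv j (MvPolynomial.pderiv j P)) x := by
    intro j; rw [pd_polyFun', pd_polyFun]
  rw [Finset.sum_congr rfl fun j _ => this j]
  simp [polyFun]

private lemma norm_sq_E3 (y : E3) : ‖y‖ ^ 2 = ∑ i, (y i) ^ 2 := by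
  rw [EuclideanSpace.norm_eq, Real.sq_sqrt (by positivity)]
  exact Finset.sum_congr rfl fun i _ => by rw [Real.norm_eq_abs, sq_abs]

open MvPolynomial in
/-- The polynomial form of the components of the vector field. -/
private def Qp (a c : ℝ) (P : MvPolynomial (Fin 3) ℝ) (i : Fin 3) : MvPolynomial (Fin 3) ℝ :=
  C a * P * X i + (C c - (X 0 * X 0 + X 1 * X 1 + X 2 * X 2)) * pderiv i P

set_option maxHeartbeats 2000000 in
open MvPolynomial in
private lemma key_identity (lam mu a c nn : ℝ) (P : MvPolynomial (Fin 3) ℝ)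
    (hlap : ∑ j : Fin 3, pderiv j (pderiv j P) = 0)
    (heuler : ∑ j : Fin 3, X j * pderiv j P = C nn * P)
    (hcoef : mu * (2*a - 4*nn - 2) + (lam+mu)*(a*(nn+3) - 2*nn) = 0)
    (i : Fin 3) :
    C mu * (∑ j : Fin 3, pderiv j (pderiv j (Qp a c P i)))
      + C (lam+mu) * pderiv i (∑ j : Fin 3, pderiv j (Qp a c P j)) = 0 := by
  simp only [Fin.sum_univ_three] at hlap heuler
  have hco0 : (C (mu * (2*a-4*nn-2) + (lam+mu)*(a*(nn+3)-2*nn)) : MvPolynomial (Fin 3) ℝ)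
      = 0 := by rw [hcoef, map_zero]
  simp only [map_add, map_mul, map_sub, map_ofNat, map_one] at hco0
  have p01 : pderiv (0:Fin 3) (X 1 : MvPolynomial (Fin 3) ℝ) = 0 := pderiv_X_of_ne (by decide)
  have p02 : pderiv (0:Fin 3) (X 2 : MvPolynomial (Fin 3) ℝ) = 0 := pderiv_X_of_ne (by decide)
  have p10 : pderiv (1:Fin 3) (X 0 : MvPolynomial (Fin 3) ℝ) = 0 := pderiv_X_of_ne (by decide)
  have p12 : pderiv (1:Fin 3) (X 2 : MvPolynomial (Fin 3) ℝ) = 0 := pderiv_X_of_ne (by decide)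
  have p20 : pderiv (2:Fin 3) (X 0 : MvPolynomial (Fin 3) ℝ) = 0 := pderiv_X_of_ne (by decide)
  have p21 : pderiv (2:Fin 3) (X 1 : MvPolynomial (Fin 3) ℝ) = 0 := pderiv_X_of_ne (by decide)
  fin_cases i
  · have h2 := congrArg (pderiv (0:Fin 3)) heuler
    have h3 := congrArg (pderiv (0:Fin 3)) hlap
    simp only [Fin.zero_eta, Fin.mk_one, Fin.reduceFinMk, map_add, map_sub, map_neg, pderiv_mul,
      pderiv_C_mul, pderiv_C, pderiv_one, pderiv_X_self, p01, p02, p10, p12, p20, p21, map_zero,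
      zero_mul, mul_zero, add_zero, zero_add, one_mul] at h2 h3
    simp only [Fin.zero_eta, Fin.mk_one, Fin.reduceFinMk, Fin.sum_univ_three, Qp, map_add,
      map_sub, map_neg, pderiv_mul, pderiv_C_mul, pderiv_C, pderiv_one, pderiv_X_self, p01, p02,
      p10, p12, p20, p21, map_zero, zero_mul, mul_zero, add_zero, zero_add, one_mul, mul_one,
      zero_sub, sub_zero, neg_zero]
    linear_combination
      (C mu * C a * X 0 - 2*(C lam + C mu) * X 0) * hlap
      + (-(4:MvPolynomial (Fin 3) ℝ)*C mu + (C lam + C mu)*(C a - 2)) * h2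
      + ((C mu + (C lam + C mu))*(C c - (X 0*X 0 + X 1*X 1 + X 2*X 2))) * h3
      + (-(4:MvPolynomial (Fin 3) ℝ)*C mu * X 1) * (pcomm 1 0 P)
      + (-(4:MvPolynomial (Fin 3) ℝ)*C mu * X 2) * (pcomm 2 0 P)
      + (C mu * (C c - (X 0*X 0 + X 1*X 1 + X 2*X 2))) * (pcomm3 1 0 P)
      + (C mu * (C c - (X 0*X 0 + X 1*X 1 + X 2*X 2))) * (pcomm3 2 0 P)
      + (pderiv (0:Fin 3) P) * hco0
  · have h2 := congrArg (pderiv (1:Fin 3)) heuler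
    have h3 := congrArg (pderiv (1:Fin 3)) hlap
    simp only [Fin.zero_eta, Fin.mk_one, Fin.reduceFinMk, map_add, map_sub, map_neg, pderiv_mul,
      pderiv_C_mul, pderiv_C, pderiv_one, pderiv_X_self, p01, p02, p10, p12, p20, p21, map_zero,
      zero_mul, mul_zero, add_zero, zero_add, one_mul] at h2 h3
    simp only [Fin.zero_eta, Fin.mk_one, Fin.reduceFinMk, Fin.sum_univ_three, Qp, map_add,
      map_sub, map_neg, pderiv_mul, pderiv_C_mul, pderiv_C, pderiv_one, pderiv_X_self, p01, p02,
      p10, p12, p20, p21, map_zero, zero_mul, mul_zero, add_zero, zero_add, one_mul, mul_one,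
      zero_sub, sub_zero, neg_zero]
    linear_combination
      (C mu * C a * X 1 - 2*(C lam + C mu) * X 1) * hlap
      + (-(4:MvPolynomial (Fin 3) ℝ)*C mu + (C lam + C mu)*(C a - 2)) * h2
      + ((C mu + (C lam + C mu))*(C c - (X 0*X 0 + X 1*X 1 + X 2*X 2))) * h3
      + (-(4:MvPolynomial (Fin 3) ℝ)*C mu * X 0) * (pcomm 0 1 P)
      + (-(4:MvPolynomial (Fin 3) ℝ)*C mu * X 2) * (pcomm 2 1 P)
      + (C mu * (C c - (X 0*X 0 + X 1*X 1 + X 2*X 2))) * (pcomm3 0 1 P)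
      + (C mu * (C c - (X 0*X 0 + X 1*X 1 + X 2*X 2))) * (pcomm3 2 1 P)
      + (pderiv (1:Fin 3) P) * hco0
  · have h2 := congrArg (pderiv (2:Fin 3)) heuler
    have h3 := congrArg (pderiv (2:Fin 3)) hlap
    simp only [Fin.zero_eta, Fin.mk_one, Fin.reduceFinMk, map_add, map_sub, map_neg, pderiv_mul,
      pderiv_C_mul, pderiv_C, pderiv_one, pderiv_X_self, p01, p02, p10, p12, p20, p21, map_zero,
      zero_mul, mul_zero, add_zero, zero_add, one_mul] at h2 h3
    simp only [Fin.zero_eta, Fin.mk_one, Fin.reduceFinMk, Fin.sum_univ_three, Qp, map_add,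
      map_sub, map_neg, pderiv_mul, pderiv_C_mul, pderiv_C, pderiv_one, pderiv_X_self, p01, p02,
      p10, p12, p20, p21, map_zero, zero_mul, mul_zero, add_zero, zero_add, one_mul, mul_one,
      zero_sub, sub_zero, neg_zero]
    linear_combination
      (C mu * C a * X 2 - 2*(C lam + C mu) * X 2) * hlap
      + (-(4:MvPolynomial (Fin 3) ℝ)*C mu + (C lam + C mu)*(C a - 2)) * h2
      + ((C mu + (C lam + C mu))*(C c - (X 0*X 0 + X 1*X 1 + X 2*X 2))) * h3
      + (-(4:MvPolynomial (Fin 3) ℝ)*C mu * X 0) * (pcomm 0 2 P)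
      + (-(4:MvPolynomial (Fin 3) ℝ)*C mu * X 1) * (pcomm 1 2 P)
      + (C mu * (C c - (X 0*X 0 + X 1*X 1 + X 2*X 2))) * (pcomm3 0 2 P)
      + (C mu * (C c - (X 0*X 0 + X 1*X 1 + X 2*X 2))) * (pcomm3 1 2 P)
      + (pderiv (2:Fin 3) P) * hco0

/-- under the strong convexity condition `μ > 0`, `3λ + 2μ > 0`, for a harmonic
homogeneous polynomial `P` of degree `n` and `a = (2nλ + 2(3n+1)μ)/((n+3)λ + (n+5)μ)`,
the field `𝒩(x) = a P(x) x + (1 − a/(2n+1) − |x|²) ∇P(x)` satisfies the Lamé equation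
`μ Δ𝒩 + (λ+μ) ∇(∇·𝒩) = 0` on `ℝ³`. -/
theorem N_field_satisfies_lame (lam mu : ℝ) (hmu : 0 < mu) (hconv : 0 < 3 * lam + 2 * mu)
    (n : ℕ) (P : MvPolynomial (Fin 3) ℝ)
    (hhom : P.IsHomogeneous n)
    (hharm : ∀ x, lap3 (polyFun P) x = 0) :
    let a : ℝ := (2 * (n : ℝ) * lam + 2 * (3 * (n : ℝ) + 1) * mu) /
      (((n : ℝ) + 3) * lam + ((n : ℝ) + 5) * mu)
    let N : E3 → E3 := fun y => (a * polyFun P y) • y +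
      (1 - a / (2 * (n : ℝ) + 1) - ‖y‖ ^ 2) • grad3 (polyFun P) y
    ∀ x : E3, mu • vlap3 N x + (lam + mu) • grad3 (div3 N) x = 0 := by
  intro a N x
  -- the scalar coefficient identity
  have hnn : (0:ℝ) ≤ (n:ℝ) := Nat.cast_nonneg n
  have hden : ((n:ℝ) + 3) * lam + ((n:ℝ) + 5) * mu > 0 := by nlinarith
  have hcoef : mu * (2*a - 4*(n:ℝ) - 2) + (lam+mu)*(a*((n:ℝ)+3) - 2*(n:ℝ)) = 0 := by
    show mu * (2*((2 * (n : ℝ) * lam + 2 * (3 * (n : ℝ) + 1) * mu) /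
      (((n : ℝ) + 3) * lam + ((n : ℝ) + 5) * mu)) - 4*(n:ℝ) - 2)
      + (lam+mu)*(((2 * (n : ℝ) * lam + 2 * (3 * (n : ℝ) + 1) * mu) /
      (((n : ℝ) + 3) * lam + ((n : ℝ) + 5) * mu))*((n:ℝ)+3) - 2*(n:ℝ)) = 0
    field_simp [show lam * ((n:ℝ) + 3) + mu * ((n:ℝ) + 5) ≠ 0 by linarith]
    ring
  set c : ℝ := 1 - a / (2 * (n:ℝ) + 1) with hc
  -- polynomial facts
  have hlapP : ∑ j : Fin 3, MvPolynomial.pderiv j (MvPolynomial.pderiv j P) = 0 := by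
    apply MvPolynomial.funext
    intro v
    have := hharm (toE3 v)
    rw [lap3_polyFun] at this
    simpa [polyFun, toE3] using this
  have heulerP := euler3 hhom
  -- components of N are polynomial
  have hN : ∀ (i : Fin 3) (y : E3), N y i = polyFun (Qp a c P i) y := by
    intro i y
    show ((a * polyFun P y) • y
      + (1 - a / (2 * (n:ℝ) + 1) - ‖y‖ ^ 2) • grad3 (polyFun P) y) i = _
    rw [PiLp.add_apply, PiLp.smul_apply, PiLp.smul_apply]
    have hg : grad3 (polyFun P) y i = polyFun (MvPolynomial.pderiv i P) y := by
      show pd (polyFun P) i y = _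
      exact pd_polyFun P i y
    rw [hg, norm_sq_E3]
    simp only [Qp, polyFun, smul_eq_mul, map_add, map_sub, map_mul, MvPolynomial.eval_C,
      MvPolynomial.eval_X, Fin.sum_univ_three, hc]
    ring
  have hNfun : ∀ i : Fin 3, (fun y => N y i) = polyFun (Qp a c P i) :=
    fun i => funext (hN i)
  -- divergence is polynomial
  have hdiv : div3 N = polyFun (∑ j : Fin 3, MvPolynomial.pderiv j (Qp a c P j)) := by
    funext y
    rw [div3]
    have : ∀ j : Fin 3, pd (fun z => N z j) j y
        = polyFun (MvPolynomial.pderiv j (Qp a c P j)) y := by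
      intro j; rw [hNfun j, pd_polyFun]
    rw [Finset.sum_congr rfl fun j _ => this j]
    simp [polyFun]
  -- componentwise verification
  refine PiLp.ext fun i => ?_
  have hL : vlap3 N x i
      = polyFun (∑ j : Fin 3, MvPolynomial.pderiv j (MvPolynomial.pderiv j (Qp a c P i))) x := by
    show lap3 (fun y => N y i) x = _
    rw [hNfun i, lap3_polyFun]
  have hG : grad3 (div3 N) x i
      = polyFun (MvPolynomial.pderiv i
          (∑ j : Fin 3, MvPolynomial.pderiv j (Qp a c P j))) x := by
    show pd (div3 N) i x = _
    rw [hdiv, pd_polyFun]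
  rw [PiLp.add_apply, PiLp.smul_apply, PiLp.smul_apply, PiLp.zero_apply, hL, hG,
    smul_eq_mul, smul_eq_mul]
  have hkey := key_identity lam mu a c (n:ℝ) P hlapP heulerP hcoef i
  have := congrArg (MvPolynomial.eval (fun j : Fin 3 => x j)) hkey
  simpa [polyFun] using this

end
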